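/- Let 0 < ε < 1/2, let k ≥ 2 be an integer, and let n be an integer with n/log n > 100k²/ε². Let p = (1 − 0.8ε)·(k−2)!/n^{k−1} and let X be a binomial random variable with C(n,k) trials and success probability p. Then P(X < (1−ε)·n/(k(k−1))) ≤ n^{−1.07}. -/

import Mathlib

open Finset

private lemma weier_aux (s : Finset ℕ) (f : ℕ → ℝ) (h0 : ∀ i ∈ s, 0 ≤ f i)
    (h1 : ∀ i ∈ s, f i ≤ 1) :
    1 - ∑ i ∈ s, f i ≤ ∏ i ∈ s, (1 - f i) := by
  induction s using Finset.cons_induction with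
  | empty => simp
  | cons a s ha ih =>
    rw [Finset.sum_cons, Finset.prod_cons]
    have h0a := h0 a (Finset.mem_cons_self a s)
    have h1a := h1 a (Finset.mem_cons_self a s)
    have ih' := ih (fun i hi => h0 i (Finset.mem_cons_of_mem hi))
      (fun i hi => h1 i (Finset.mem_cons_of_mem hi))
    have hsum : 0 ≤ ∑ i ∈ s, f i := Finset.sum_nonneg (fun i hi => h0 i (Finset.mem_cons_of_mem hi))
    nlinarith [mul_le_mul_of_nonneg_left ih' (by linarith : (0:ℝ) ≤ 1 - f a)]

set_option maxHeartbeats 2000000 in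

/-- For `0 < ε < 1/2`, `k ≥ 2`, `n/log n > 100k²/ε²`, and
`p = (1 - 0.8ε)·(k-2)!/n^{k-1}`, a binomial random variable `X` with `C(n,k)` trials and
success probability `p` satisfies `P(X < (1-ε)·n/(k(k-1))) ≤ n^{-1.07}`.
The left-hand side is written out as the binomial tail
`Σ_{j : (j:ℝ) < (1-ε)n/(k(k-1))} C(C(n,k), j) p^j (1-p)^{C(n,k)-j}`. -/
theorem binomial_lower_tail (ε : ℝ) (hε0 : 0 < ε) (hε : ε < 1 / 2)
    (k : ℕ) (hk : 2 ≤ k) (n : ℕ)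
    (hn : (100 : ℝ) * k ^ 2 / ε ^ 2 < (n : ℝ) / Real.log n) :
    (∑ j ∈ Finset.range (Nat.choose n k + 1),
        if (j : ℝ) < (1 - ε) * n / ((k : ℝ) * ((k : ℝ) - 1)) then
          ((Nat.choose n k).choose j : ℝ) *
            ((1 - 0.8 * ε) * (Nat.factorial (k - 2)) / (n : ℝ) ^ (k - 1)) ^ j *
            (1 - (1 - 0.8 * ε) * (Nat.factorial (k - 2)) / (n : ℝ) ^ (k - 1)) ^
              (Nat.choose n k - j)
        else 0)
      ≤ (n : ℝ) ^ (-(1.07 : ℝ)) := by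
  obtain ⟨m, rfl⟩ : ∃ m, k = m + 2 := ⟨k - 2, by omega⟩
  clear hk
  have h1ε : (0:ℝ) < 1 - ε := by linarith
  have h08 : (0:ℝ) < 1 - 0.8 * ε := by linarith
  have hε2 : (0:ℝ) < ε ^ 2 := by positivity
  -- basic facts about n
  have hlog : 0 < Real.log n := by
    by_contra h
    push_neg at h
    have h2 : (n:ℝ) / Real.log n ≤ 0 := div_nonpos_of_nonneg_of_nonpos (Nat.cast_nonneg n) h
    have h3 : (0:ℝ) < (100 : ℝ) * (↑(m+2)) ^ 2 / ε ^ 2 := by positivity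
    linarith
  have hnpos : (0:ℝ) < n := by
    rcases Nat.eq_zero_or_pos n with h | h
    · simp [h] at hlog
    · exact_mod_cast h
  have hn' : (100 : ℝ) * (↑(m+2):ℝ) ^ 2 * Real.log n < (n:ℝ) * ε ^ 2 := by
    rw [div_lt_div_iff₀ hε2 hlog] at hn
    linarith
  have hk4 : (4:ℝ) ≤ (↑(m+2):ℝ) ^ 2 := by
    have : (2:ℝ) ≤ (↑(m+2):ℝ) := by exact_mod_cast Nat.le_add_left 2 m
    nlinarith
  have hε14 : ε^2 ≤ 1/4 := by nlinarith
  have h1600 : 1600 * Real.log n < (n:ℝ) := by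
    nlinarith [mul_nonneg hnpos.le (by linarith : (0:ℝ) ≤ 1/4 - ε^2),
      mul_le_mul_of_nonneg_right hk4 hlog.le]
  have hnbig : (1100:ℝ) < n := by
    have h2 : (1:ℝ) ≤ n := by exact_mod_cast hnpos
    rcases le_or_gt (2:ℝ) (n:ℝ) with h | h
    · have := Real.log_le_log (by norm_num) h
      have hl2 := Real.log_two_gt_d9
      nlinarith
    · have hn1 : n = 1 := by
        have h5 : n < 2 := by exact_mod_cast h
        have h6 : 0 < n := by exact_mod_cast hnpos
        omega
      simp [hn1] at hlog
  have hlogn1 : 1 ≤ Real.log n := by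
    rw [Real.le_log_iff_exp_le hnpos]
    have := Real.exp_one_lt_d9
    linarith
  have hk2n : 100 * (↑(m+2):ℝ)^2 ≤ (n:ℝ) * ε^2 := by nlinarith
  have hkn : m + 2 ≤ n := by
    have h1 : (↑(m+2):ℝ) ≤ (↑(m+2):ℝ)^2 := by nlinarith
    have h2 : (↑(m+2):ℝ) ≤ (n:ℝ) := by
      nlinarith [mul_nonneg hnpos.le (by linarith : (0:ℝ) ≤ 1/4 - ε^2)]
    exact_mod_cast h2
  -- normalize k
  have hm2 : m + 2 - 2 = m := by omega
  have hm1 : m + 2 - 1 = m + 1 := by omega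
  rw [hm2, hm1]
  set N := Nat.choose n (m + 2) with hN
  set p : ℝ := (1 - 0.8 * ε) * (Nat.factorial m) / (n : ℝ) ^ (m + 1) with hp
  set t : ℝ := (1 - ε) * (n:ℝ) / ((↑(m + 2):ℝ) * ((↑(m + 2):ℝ) - 1)) with ht
  have hPn : (0:ℝ) < (n:ℝ) ^ (m + 1) := by positivity
  have hfactn : ((Nat.factorial m : ℕ) : ℝ) ≤ (n:ℝ) ^ (m + 1) := by
    have h1 : Nat.factorial m ≤ n ^ (m + 1) := by
      calc Nat.factorial m ≤ m ^ m := Nat.factorial_le_pow m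
        _ ≤ n ^ m := Nat.pow_le_pow_left (by omega) m
        _ ≤ n ^ (m + 1) := Nat.pow_le_pow_right (by omega) (by omega)
    exact_mod_cast h1
  have hp0 : 0 ≤ p := by
    rw [hp]
    exact div_nonneg (mul_nonneg h08.le (Nat.cast_nonneg _)) hPn.le
  have hp1 : p ≤ 1 := by
    rw [hp, div_le_one hPn]
    nlinarith only [hfactn, mul_nonneg (by linarith only [hε0] : (0:ℝ) ≤ 0.8*ε) (Nat.cast_nonneg (Nat.factorial m))]
  have hq0 : 0 ≤ 1 - p := by linarith
  set s : ℝ := 0.15 * ε / (1 - ε) with hs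
  have hs0 : 0 < s := div_pos (by linarith) h1ε
  have hs15 : s ≤ 0.15 := by
    rw [hs, div_le_iff₀ h1ε]; nlinarith only [hε0, hε]
  have stepA : (∑ j ∈ Finset.range (N + 1),
      if (j : ℝ) < t then (N.choose j : ℝ) * p ^ j * (1 - p) ^ (N - j) else 0)
      ≤ Real.exp (s * t) * (p * Real.exp (-s) + (1 - p)) ^ N := by
    rw [add_pow, Finset.mul_sum]
    apply Finset.sum_le_sum
    intro j hj
    have hterm : 0 ≤ (N.choose j : ℝ) * p ^ j * (1 - p) ^ (N - j) :=
      mul_nonneg (mul_nonneg (Nat.cast_nonneg _) (pow_nonneg hp0 _)) (pow_nonneg hq0 _)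
    have hexpj : (Real.exp (-s)) ^ j = Real.exp ((j:ℝ) * (-s)) := (Real.exp_nat_mul _ j).symm
    split_ifs with hj2
    · have heq : Real.exp (s * t) * ((p * Real.exp (-s)) ^ j * (1 - p) ^ (N - j) * (N.choose j : ℝ))
          = Real.exp (s * (t - j)) * ((N.choose j : ℝ) * p ^ j * (1 - p) ^ (N - j)) := by
        rw [mul_pow, hexpj, show s * (t - (j:ℝ)) = s * t + (j:ℝ) * (-s) by ring, Real.exp_add]
        ring
      rw [heq]
      have h1 : (1:ℝ) ≤ Real.exp (s * (t - j)) :=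
        Real.one_le_exp (mul_nonneg hs0.le (by linarith))
      nlinarith only [hterm, h1]
    · have h2 : (0:ℝ) ≤ (p * Real.exp (-s)) ^ j * (1 - p) ^ (N - j) * (N.choose j : ℝ) :=
        mul_nonneg (mul_nonneg (pow_nonneg (mul_nonneg hp0 (Real.exp_pos _).le) _)
          (pow_nonneg hq0 _)) (Nat.cast_nonneg _)
      exact mul_nonneg (Real.exp_pos _).le h2
  have hbase : 0 ≤ p * Real.exp (-s) + (1 - p) :=
    add_nonneg (mul_nonneg hp0 (Real.exp_pos _).le) hq0
  have hb2 : p * Real.exp (-s) + (1 - p) ≤ Real.exp (p * (Real.exp (-s) - 1)) := by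
    have h := Real.add_one_le_exp (p * (Real.exp (-s) - 1))
    linarith only [h]
  have stepB : (p * Real.exp (-s) + (1 - p)) ^ N ≤ Real.exp ((N:ℝ) * (p * (Real.exp (-s) - 1))) := by
    calc (p * Real.exp (-s) + (1 - p)) ^ N ≤ (Real.exp (p * (Real.exp (-s) - 1))) ^ N :=
        pow_le_pow_left₀ hbase hb2 N
      _ = Real.exp ((N:ℝ) * (p * (Real.exp (-s) - 1))) := (Real.exp_nat_mul _ N).symm
  have stepC : s * t + (N:ℝ) * (p * (Real.exp (-s) - 1)) ≤ -(1.07) * Real.log n := by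
    have hKpos : (0:ℝ) < ((m:ℝ)+2) * ((m:ℝ)+1) := by positivity
    set AA : ℝ := (n:ℝ) / (((m:ℝ)+2) * ((m:ℝ)+1)) with hAA
    have hAA0 : 0 < AA := div_pos hnpos hKpos
    have hn'' : 100 * ((m:ℝ)+2)^2 * Real.log n < (n:ℝ) * ε^2 := by push_cast at hn' ⊢; linarith
    -- exp upper bound
    have hexpb : Real.exp (-s) ≤ 1 - s + 0.54 * s ^ 2 := by
      have habs : |(-s)| ≤ 1 := by rw [abs_neg, abs_of_pos hs0]; linarith
      have hb := Real.exp_bound habs (by norm_num : 0 < 3)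
      rw [abs_neg, abs_of_pos hs0] at hb
      simp [Finset.sum_range_succ, Nat.factorial] at hb
      rw [abs_le] at hb
      nlinarith only [hb.2, hs0.le, hs15, mul_nonneg (mul_nonneg hs0.le hs0.le) (by linarith only [hs15] : (0:ℝ) ≤ 0.15 - s)]
    -- descFactorial identities
    have hdf : ((n.descFactorial (m + 2) : ℕ) : ℝ) = ∏ i ∈ Finset.range (m + 2), ((n:ℝ) - (i:ℝ)) := by
      rw [Nat.descFactorial_eq_prod_range, Nat.cast_prod]
      refine Finset.prod_congr rfl fun i hi => ?_
      have hi' := Finset.mem_range.mp hi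
      rw [Nat.cast_sub (by omega)]
    have hNfac : (N:ℝ) * (((m+2).factorial : ℕ) : ℝ) = ∏ i ∈ Finset.range (m + 2), ((n:ℝ) - (i:ℝ)) := by
      rw [← hdf, Nat.descFactorial_eq_factorial_mul_choose]
      push_cast
      ring
    have hfac2 : (((m+2).factorial : ℕ) : ℝ) = ((m:ℝ)+2) * ((m:ℝ)+1) * ((Nat.factorial m : ℕ) : ℝ) := by
      rw [show m + 2 = (m+1)+1 from rfl, Nat.factorial_succ, Nat.factorial_succ]
      push_cast
      ring
    -- product lower bound
    have hsum : ∑ i ∈ Finset.range (m + 2), (i:ℝ)/(n:ℝ) = (((m:ℝ)+2) * ((m:ℝ)+1)/2)/(n:ℝ) := by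
      rw [← Finset.sum_div]
      congr 1
      have h1 : (∑ i ∈ Finset.range (m + 2), i) * 2 = (m+2) * (m+1) := by
        rw [Finset.sum_range_id_mul_two]
        rfl
      have h2 : ((∑ i ∈ Finset.range (m + 2), i : ℕ) : ℝ) * 2 = ((m:ℝ)+2) * ((m:ℝ)+1) := by
        exact_mod_cast congrArg (Nat.cast : ℕ → ℝ) h1
      push_cast at h2 ⊢
      linarith
    have hprodlow : (n:ℝ)^(m+1) * (n:ℝ) * (1 - ((m:ℝ)+2) * ((m:ℝ)+1)/(2*(n:ℝ)))
        ≤ ∏ i ∈ Finset.range (m + 2), ((n:ℝ) - (i:ℝ)) := by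
      have hrw : ∏ i ∈ Finset.range (m + 2), ((n:ℝ) - (i:ℝ))
          = (n:ℝ)^(m+2) * ∏ i ∈ Finset.range (m + 2), (1 - (i:ℝ)/(n:ℝ)) := by
        have hc : (n:ℝ)^(m+2) = ∏ _i ∈ Finset.range (m + 2), (n:ℝ) := by
          rw [Finset.prod_const, Finset.card_range]
        rw [hc, ← Finset.prod_mul_distrib]
        refine Finset.prod_congr rfl fun i hi => ?_
        field_simp
      rw [hrw]
      have hw := weier_aux (Finset.range (m+2)) (fun i => (i:ℝ)/(n:ℝ))
        (fun i _ => by positivity)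
        (fun i hi => by
          have hi' := Finset.mem_range.mp hi
          rw [div_le_one hnpos]
          have : (i:ℝ) ≤ ((m:ℝ)+1) := by
            have : (i:ℕ) ≤ m + 1 := by omega
            exact_mod_cast this
          have hmn : ((m:ℝ)+2) ≤ (n:ℝ) := by exact_mod_cast hkn
          linarith)
      rw [hsum] at hw
      have hpow2 : (n:ℝ)^(m+2) = (n:ℝ)^(m+1) * (n:ℝ) := by ring
      rw [hpow2]
      have h0 : (0:ℝ) ≤ (n:ℝ)^(m+1) * (n:ℝ) := by positivity
      have heq2 : 1 - (((m:ℝ)+2) * ((m:ℝ)+1)/2)/(n:ℝ) = 1 - ((m:ℝ)+2) * ((m:ℝ)+1)/(2*(n:ℝ)) := by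
        ring
      rw [heq2] at hw
      exact mul_le_mul_of_nonneg_left hw h0
    have hKsmall : ((m:ℝ)+2) * ((m:ℝ)+1)/(2*(n:ℝ)) ≤ ε/400 := by
      rw [div_le_iff₀ (by positivity)]
      nlinarith only [hn'', hε0, hnpos, hlog,
        mul_nonneg (mul_nonneg hnpos.le hε0.le) (by linarith only [hε] : (0:ℝ) ≤ 1/2 - ε),
        mul_le_mul_of_nonneg_left hlogn1 (by positivity : (0:ℝ) ≤ 100 * ((m:ℝ)+2)^2),
        mul_nonneg hlog.le (by positivity : (0:ℝ) ≤ ((m:ℝ)+2))]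
    -- lower bound on N*p
    have hNp : (1 - 0.8*ε) * (1 - ε/400) * AA ≤ (N:ℝ) * p := by
      have hNm : (N:ℝ) * ((Nat.factorial m : ℕ) : ℝ) * (((m:ℝ)+2) * ((m:ℝ)+1))
          = ∏ i ∈ Finset.range (m + 2), ((n:ℝ) - (i:ℝ)) := by
        rw [← hNfac, hfac2]; ring
      have h3 : (n:ℝ)^(m+1) * (n:ℝ) * (1 - ε/400)
          ≤ (N:ℝ) * ((Nat.factorial m : ℕ) : ℝ) * (((m:ℝ)+2) * ((m:ℝ)+1)) := by
        rw [hNm]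
        refine le_trans ?_ hprodlow
        have h0 : (0:ℝ) ≤ (n:ℝ)^(m+1) * (n:ℝ) := by positivity
        nlinarith only [hKsmall, h0]
      have h4 := mul_le_mul_of_nonneg_left h3 h08.le
      have h6 : ((1 - 0.8*ε) * (1 - ε/400) * (n:ℝ)) / (((m:ℝ)+2) * ((m:ℝ)+1))
          ≤ ((N:ℝ) * ((1 - 0.8*ε) * ((Nat.factorial m : ℕ) : ℝ))) / ((n:ℝ)^(m+1)) := by
        rw [div_le_div_iff₀ hKpos hPn]
        nlinarith only [h4]
      calc (1 - 0.8*ε) * (1 - ε/400) * AA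
          = ((1 - 0.8*ε) * (1 - ε/400) * (n:ℝ)) / (((m:ℝ)+2) * ((m:ℝ)+1)) := by rw [hAA]; ring
        _ ≤ ((N:ℝ) * ((1 - 0.8*ε) * ((Nat.factorial m : ℕ) : ℝ))) / ((n:ℝ)^(m+1)) := h6
        _ = (N:ℝ) * p := by rw [hp]; ring
    -- assemble
    have hsq : Real.exp (-s) - 1 ≤ -(s * (1 - 0.54 * s)) := by nlinarith only [hexpb]
    have hexp_le1 : Real.exp (-s) - 1 ≤ 0 := by
      have h1 : Real.exp (-s) ≤ Real.exp 0 := Real.exp_le_exp.mpr (by linarith)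
      rw [Real.exp_zero] at h1
      linarith
    set M : ℝ := (1 - 0.8*ε) * (1 - ε/400) * AA with hM
    have hM0 : 0 ≤ M := by
      rw [hM]
      have : (0:ℝ) ≤ 1 - ε/400 := by linarith
      exact mul_nonneg (mul_nonneg h08.le this) hAA0.le
    have h7 : (N:ℝ) * (p * (Real.exp (-s) - 1)) ≤ M * (Real.exp (-s) - 1) := by
      nlinarith only [mul_nonneg (sub_nonneg.mpr hNp) (by linarith only [hexp_le1] : (0:ℝ) ≤ 1 - Real.exp (-s))]
    have h8 : M * (Real.exp (-s) - 1) ≤ M * (-(s * (1 - 0.54 * s))) :=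
      mul_le_mul_of_nonneg_left hsq hM0
    have ht' : t = (1-ε) * AA := by
      rw [ht, hAA]
      push_cast
      ring
    have hA100 : 100 * Real.log n < ε^2 * AA := by
      have h9 : ε^2 * AA = ε^2 * (n:ℝ) / (((m:ℝ)+2) * ((m:ℝ)+1)) := by rw [hAA]; ring
      rw [h9, lt_div_iff₀ hKpos]
      nlinarith only [hn'', mul_nonneg hlog.le (by positivity : (0:ℝ) ≤ 100 * ((m:ℝ)+2))]
    have hseq : s * (1-ε) = 0.15 * ε := by rw [hs]; field_simp
    have hB : (1-ε) - (1 - 0.8*ε) * (1 - ε/400) * (1 - 0.54*s) ≤ -0.099*ε := by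
      have hB' : ((1-ε) - (1 - 0.8*ε) * (1 - ε/400) * (1 - 0.54*s)) * (1-ε)
          ≤ (-0.099*ε) * (1-ε) := by
        nlinarith only [hseq, hε0, hε, mul_pos hε0 h1ε, sq_nonneg ε,
          mul_nonneg (mul_nonneg hε0.le hε0.le) (by linarith only [hε] : (0:ℝ) ≤ 1/2 - ε)]
      exact (mul_le_mul_iff_of_pos_right h1ε).mp hB'
    have hsge : 0.15 * ε ≤ s := by
      rw [hs, le_div_iff₀ h1ε]; nlinarith only [hε0, hε]
    have hmain : s * t + M * (-(s * (1 - 0.54 * s))) ≤ -(1.07) * Real.log n := by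
      have e1 : s * t + M * (-(s * (1 - 0.54 * s)))
          = s * AA * ((1-ε) - (1 - 0.8*ε) * (1 - ε/400) * (1 - 0.54*s)) := by
        rw [ht', hM]; ring
      rw [e1]
      have e2 : s * AA * ((1-ε) - (1 - 0.8*ε) * (1 - ε/400) * (1 - 0.54*s))
          ≤ s * AA * (-0.099*ε) :=
        mul_le_mul_of_nonneg_left hB (mul_nonneg hs0.le hAA0.le)
      have e4 : 0.15*ε * (AA * (0.099 * ε)) ≤ s * (AA * (0.099*ε)) :=
        mul_le_mul_of_nonneg_right hsge (by positivity)
      refine le_trans e2 ?_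
      nlinarith only [hA100, hlog, e4]
    linarith only [h7, h8, hmain]
  calc (∑ j ∈ Finset.range (N + 1),
      if (j : ℝ) < t then (N.choose j : ℝ) * p ^ j * (1 - p) ^ (N - j) else 0)
      ≤ Real.exp (s * t) * (p * Real.exp (-s) + (1 - p)) ^ N := stepA
    _ ≤ Real.exp (s * t) * Real.exp ((N:ℝ) * (p * (Real.exp (-s) - 1))) :=
        mul_le_mul_of_nonneg_left stepB (Real.exp_pos _).le
    _ = Real.exp (s * t + (N:ℝ) * (p * (Real.exp (-s) - 1))) := (Real.exp_add _ _).symm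
    _ ≤ Real.exp (-(1.07) * Real.log n) := Real.exp_le_exp.mpr stepC
    _ = (n:ℝ) ^ (-(1.07:ℝ)) := by
        rw [Real.rpow_def_of_pos hnpos]
        congr 1
        ring
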